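/- Assume λ + μ² ≠ 0, let P, Q, R, S be a pqrs-quad satisfying the B-relations, and suppose the first-integral constant 𝔇 = P(0)·S(0) − Q(0)·R(0) is nonzero. Then the operator L_B acts injectively on the space of solutions of the special double confluent Heun equation: if F is entire, ℋ[F] = 0, and L_B[F](w) = 0 for all w ∈ ℂ, then F(w) = 0 for all w ∈ ℂ. -/

import Mathlib

noncomputable def ipi : ℂ := (Real.pi : ℂ) * Complex.I

noncomputable def heunOp (ell lam mu : ℂ) (F : ℂ → ℂ) : ℂ → ℂ := fun w =>
  deriv (deriv F) w + (ell + mu * (Complex.exp (-w) - Complex.exp w)) * deriv F w +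
    (lam - (ell + 1) * mu * Complex.exp w) * F w

noncomputable def opLB (ell mu : ℂ) (R S : ℂ → ℂ) (F : ℂ → ℂ) : ℂ → ℂ := fun w =>
  Complex.exp ((1 - ell) * w) * Complex.exp (mu * (Complex.exp w + Complex.exp (-w))) *
    (S (w + ipi) * F (w + ipi) - Complex.exp w * R (w + ipi) * deriv F (w + ipi))

theorem statement_13 (ell lam mu : ℂ) (hne : lam + mu ^ 2 ≠ 0) (P Q R S : ℂ → ℂ)
    (hP : Differentiable ℂ P) (hQ : Differentiable ℂ Q)
    (hR : Differentiable ℂ R) (hS : Differentiable ℂ S)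
    (hsys1 : ∀ w : ℂ, Complex.exp w * deriv P w =
      (mu + (ell - 1) * Complex.exp w) * P w - Q w + Complex.exp (2 * w) * R w)
    (hsys2 : ∀ w : ℂ, deriv Q w =
      Complex.exp w * ((lam - (ell + 1) * mu * Complex.exp w) * P w + mu * Q w + S w))
    (hsys3 : ∀ w : ℂ, Complex.exp w * deriv R w =
      -(lam + mu ^ 2) * P w + Complex.exp w * (2 * (ell - 1) - mu * Complex.exp w) * R w - S w)
    (hsys4 : ∀ w : ℂ, Complex.exp w * deriv S w =
      -(lam + mu ^ 2) * Q w + Complex.exp (2 * w) * (lam - (ell + 1) * mu * Complex.exp w) * R w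
        + ((ell - 1) * Complex.exp w - mu) * S w)
    (hB : ∀ w : ℂ,
      P (w + ipi) = Complex.exp (Complex.I * ell * (Real.pi : ℂ)) * (lam + mu ^ 2)⁻¹ *
        (mu * Complex.exp (2 * w) * R w + S w) ∧
      Q (w + ipi) = -Complex.exp (Complex.I * ell * (Real.pi : ℂ)) *
        ((mu * Complex.exp (2 * w) * P w + Q w) +
          mu * (lam + mu ^ 2)⁻¹ * Complex.exp (2 * w) *
            (mu * Complex.exp (2 * w) * R w + S w)) ∧
      R (w + ipi) = -Complex.exp (Complex.I * ell * (Real.pi : ℂ)) * R w ∧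
      S (w + ipi) = Complex.exp (Complex.I * ell * (Real.pi : ℂ)) * ((lam + mu ^ 2) * P w + mu * Complex.exp (2 * w) * R w))
    (hD : P 0 * S 0 - Q 0 * R 0 ≠ 0)
    (F : ℂ → ℂ) (hF : Differentiable ℂ F) (hF' : Differentiable ℂ (deriv F))
    (hHeun : ∀ w : ℂ, heunOp ell lam mu F w = 0)
    (hLB : ∀ w : ℂ, opLB ell mu R S F w = 0) :
    ∀ w : ℂ, F w = 0 := by
  -- Step A: the "Wronskian" D = PS - QR never vanishes
  set D : ℂ → ℂ := fun v => P v * S v - Q v * R v with hDdef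
  have hDdiff : Differentiable ℂ D := (hP.mul hS).sub (hQ.mul hR)
  have hDderiv : ∀ v : ℂ, HasDerivAt D (2 * (ell - 1) * D v) v := by
    intro v
    have hd : HasDerivAt D (deriv P v * S v + P v * deriv S v -
        (deriv Q v * R v + Q v * deriv R v)) v :=
      (((hP v).hasDerivAt.mul (hS v).hasDerivAt)).sub
        (((hQ v).hasDerivAt.mul (hR v).hasDerivAt))
    convert hd using 1
    have h1 := hsys1 v; have h2 := hsys2 v; have h3 := hsys3 v; have h4 := hsys4 v
    rw [two_mul, Complex.exp_add] at h1 h4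
    have he : Complex.exp v ≠ 0 := Complex.exp_ne_zero v
    apply mul_left_cancel₀ he
    simp only [hDdef]
    linear_combination (-(S v)) * h1 - P v * h4 + Complex.exp v * R v * h2 + Q v * h3
  have hconst : ∀ v : ℂ, D v * Complex.exp (-(2 * (ell - 1) * v)) = D 0 := by
    intro v
    have hder : ∀ u : ℂ, HasDerivAt (fun u => D u * Complex.exp (-(2 * (ell - 1) * u))) 0 u := by
      intro u
      have he : HasDerivAt (fun u : ℂ => Complex.exp (-(2 * (ell - 1) * u)))
          (-(2 * (ell - 1)) * Complex.exp (-(2 * (ell - 1) * u))) u := by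
        have := (Complex.hasDerivAt_exp (-(2 * (ell - 1) * u))).comp u
          (((hasDerivAt_id u).const_mul (2 * (ell - 1))).neg)
        simpa [mul_comm, Function.comp_def] using this
      have : HasDerivAt (fun u => D u * Complex.exp (-(2 * (ell - 1) * u)))
          (2 * (ell - 1) * D u * Complex.exp (-(2 * (ell - 1) * u)) +
            D u * (-(2 * (ell - 1)) * Complex.exp (-(2 * (ell - 1) * u)))) u :=
        (hDderiv u).fun_mul he
      convert this using 1
      ring
    have := is_const_of_deriv_eq_zero (fun u => ((hder u).differentiableAt))
      (fun u => (hder u).deriv) v 0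
    simpa using this
  have hDne : ∀ v : ℂ, D v ≠ 0 := by
    intro v hv
    have := hconst v
    rw [hv, zero_mul] at this
    exact hD this.symm
  -- Step B: S F + e^w R F' = 0
  have hG : ∀ v : ℂ, S v * F v + Complex.exp v * R v * deriv F v = 0 := by
    intro v
    have h := hLB (v - ipi)
    simp only [opLB, sub_add_cancel] at h
    have he1 : Complex.exp ((1 - ell) * (v - ipi)) ≠ 0 := Complex.exp_ne_zero _
    have he2 : Complex.exp (mu * (Complex.exp (v - ipi) + Complex.exp (-(v - ipi)))) ≠ 0 :=
      Complex.exp_ne_zero _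
    have h3 : S v * F v - Complex.exp (v - ipi) * R v * deriv F v = 0 := by
      rcases mul_eq_zero.1 h with h' | h'
      · rcases mul_eq_zero.1 h' with h'' | h''
        · exact absurd h'' he1
        · exact absurd h'' he2
      · exact h'
    have hexpv : Complex.exp (v - ipi) = -Complex.exp v := by
      rw [Complex.exp_sub, ipi, Complex.exp_pi_mul_I]
      field_simp
    rw [hexpv] at h3
    linear_combination h3
  -- Step C: Q F + e^w P F' = 0
  have hQP : ∀ v : ℂ, Q v * F v + Complex.exp v * P v * deriv F v = 0 := by
    intro v
    have hGfun : (fun u => S u * F u + Complex.exp u * R u * deriv F u) = fun _ : ℂ => (0:ℂ) :=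
      funext hG
    have hd : HasDerivAt (fun u => S u * F u + Complex.exp u * R u * deriv F u)
        ((deriv S v * F v + S v * deriv F v) +
          ((Complex.exp v * R v + Complex.exp v * deriv R v) * deriv F v +
            Complex.exp v * R v * deriv (deriv F) v)) v :=
      ((hS v).hasDerivAt.mul (hF v).hasDerivAt).add
        (((Complex.hasDerivAt_exp v).mul (hR v).hasDerivAt).mul (hF' v).hasDerivAt)
    rw [hGfun] at hd
    have h0 := hd.unique (hasDerivAt_const v 0)
    have h3 := hsys3 v; have h4 := hsys4 v
    rw [two_mul, Complex.exp_add] at h4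
    have hH := hHeun v
    simp only [heunOp] at hH
    have hGv := hG v
    have hinv : Complex.exp (-v) * Complex.exp v = 1 := by
      rw [← Complex.exp_add]; simp
    have key : (lam + mu ^ 2) * (Q v * F v + Complex.exp v * P v * deriv F v) = 0 := by
      linear_combination (-(Complex.exp v)) * h0 + ((ell - 1) * Complex.exp v - mu) * hGv +
        F v * h4 + Complex.exp v * deriv F v * h3 +
        ((Complex.exp v)^2 * R v) * hH +
        (-(mu * Complex.exp v * R v * deriv F v)) * hinv
    rcases mul_eq_zero.1 key with h | h
    · exact absurd h hne
    · exact h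
  -- Final step
  intro w
  have h1 := hG w
  have h2 := hQP w
  have h3 : D w * F w = 0 := by
    simp only [hDdef]
    linear_combination P w * h1 - R w * h2
  rcases mul_eq_zero.1 h3 with h | h
  · exact absurd h (hDne w)
  · exact h
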